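/- Let L be a finite lattice in which μ(x,y) ≠ 0 for all x ≤ y. Then every family F ⊆ L shatters at least |F| elements, i.e., |Str(F)| ≥ |F|, where Str(F) = {z ∈ L : F shatters z}. -/

import Mathlib

open scoped Classical

/-- `F` shatters `z`: for every `x ≤ z` there is `w ∈ F` with `w ⊓ z = x`. -/
def Shatters {L : Type*} [SemilatticeInf L] (F : Set L) (z : L) : Prop :=
  ∀ x ≤ z, ∃ w ∈ F, w ⊓ z = x

/-- The set of elements shattered by `F`. -/
def Str {L : Type*} [SemilatticeInf L] (F : Set L) : Set L := {z | Shatters F z}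


/-- The Möbius function of a finite poset. -/
noncomputable def mu {L : Type*} [PartialOrder L] [Fintype L] (x y : L) : ℚ :=
  if x = y then 1
  else if x ≤ y then
    - ∑ z ∈ (Finset.univ.filter fun z => x ≤ z ∧ z < y).attach, mu x z.1
  else 0
termination_by (Finset.univ.filter fun z : L => z < y).card
decreasing_by
  · have hz := (Finset.mem_filter.mp z.2).2.2
    apply Finset.card_lt_card
    constructor
    · intro w hw
      simp only [Finset.mem_filter, Finset.mem_univ, true_and] at hw ⊢
      exact hw.trans hz
    · intro hsub
      have hmem : z.1 ∈ Finset.univ.filter fun w : L => w < y := by simp [hz]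
      have := hsub hmem
      simp at this

lemma mu_self {L : Type*} [PartialOrder L] [Fintype L] (x : L) : mu x x = 1 := by
  rw [mu]; simp

lemma mu_of_lt {L : Type*} [PartialOrder L] [Fintype L] (x z : L) (h : x < z) :
    mu x z = - ∑ y ∈ (Finset.univ.filter fun y => x ≤ y ∧ y < z), mu x y := by
  rw [mu, if_neg h.ne, if_pos h.le, Finset.sum_attach]

lemma sum_mu_interval {L : Type*} [PartialOrder L] [Fintype L] (x z : L) (hxz : x ≤ z) :
    ∑ y ∈ (Finset.univ.filter fun y => x ≤ y ∧ y ≤ z), mu x y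
      = if x = z then 1 else 0 := by
  rcases eq_or_lt_of_le hxz with rfl | hlt
  · rw [if_pos rfl]
    have hs : (Finset.univ.filter fun y => x ≤ y ∧ y ≤ x) = {x} := by
      ext y
      simp only [Finset.mem_filter, Finset.mem_univ, true_and, Finset.mem_singleton]
      constructor
      · rintro ⟨h1, h2⟩; exact le_antisymm h2 h1
      · rintro rfl; exact ⟨le_refl _, le_refl _⟩
    rw [hs, Finset.sum_singleton, mu_self]
  · rw [if_neg hlt.ne]
    have hsplit : (Finset.univ.filter fun y => x ≤ y ∧ y ≤ z)
        = insert z (Finset.univ.filter fun y => x ≤ y ∧ y < z) := by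
      ext y
      simp only [Finset.mem_filter, Finset.mem_univ, true_and, Finset.mem_insert]
      constructor
      · rintro ⟨h1, h2⟩
        rcases eq_or_lt_of_le h2 with rfl | h3
        · exact Or.inl rfl
        · exact Or.inr ⟨h1, h3⟩
      · rintro (rfl | ⟨h1, h2⟩)
        · exact ⟨hxz, le_refl _⟩
        · exact ⟨h1, h2.le⟩
    rw [hsplit, Finset.sum_insert (by simp), mu_of_lt x z hlt]
    ring

/-- Möbius inversion computation: for `x ≤ z`, summing the "indicator rows" against
the Möbius function over the interval `[x, z]` picks out those `w` with `w ⊓ z = x`. -/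
lemma key_inversion {L : Type*} [Lattice L] [Fintype L] {ι : Type*} [Fintype ι]
    (c : ι → ℚ) (v : ι → L) (z x : L) (hxz : x ≤ z) :
    ∑ y ∈ (Finset.univ.filter fun y => x ≤ y ∧ y ≤ z),
        mu x y * (∑ w, c w * (if y ≤ v w then (1:ℚ) else 0))
      = ∑ w, c w * (if v w ⊓ z = x then (1:ℚ) else 0) := by
  simp_rw [Finset.mul_sum]
  rw [Finset.sum_comm]
  refine Finset.sum_congr rfl fun w _ => ?_
  have hterm : ∀ y : L, mu x y * (c w * (if y ≤ v w then (1:ℚ) else 0))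
      = c w * (if y ≤ v w then mu x y else 0) := by
    intro y; split <;> ring
  simp_rw [hterm]
  rw [← Finset.mul_sum]
  congr 1
  rw [← Finset.sum_filter, Finset.filter_filter]
  have hset : (Finset.univ.filter fun y => (x ≤ y ∧ y ≤ z) ∧ y ≤ v w)
      = Finset.univ.filter (fun y => x ≤ y ∧ y ≤ v w ⊓ z) := by
    ext y
    simp only [Finset.mem_filter, Finset.mem_univ, true_and, le_inf_iff]
    tauto
  rw [hset]
  by_cases hx : x ≤ v w ⊓ z
  · rw [sum_mu_interval x (v w ⊓ z) hx]
    by_cases he : x = v w ⊓ z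
    · rw [if_pos he, if_pos he.symm]
    · rw [if_neg he, if_neg fun h => he h.symm]
  · have hempty : (Finset.univ.filter fun y => x ≤ y ∧ y ≤ v w ⊓ z) = ∅ := by
      ext y
      simp only [Finset.mem_filter, Finset.mem_univ, true_and, Finset.notMem_empty,
        iff_false, not_and]
      intro h1 h2
      exact hx (h1.trans h2)
    rw [hempty, Finset.sum_empty, if_neg fun h => hx (le_of_eq h.symm)]

/-- SSP lemma: a finite lattice with nonvanishing Möbius function is SSP:
every family shatters at least as many elements as its cardinality. -/
theorem ssp_of_mu_nonvanishing {L : Type*} [Lattice L] [Fintype L]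
    (hmu : ∀ x y : L, x ≤ y → mu x y ≠ 0) (F : Set L) :
    F.ncard ≤ (Str F).ncard := by
  classical
  rw [← Nat.card_coe_set_eq, ← Nat.card_coe_set_eq,
    Nat.card_eq_fintype_card, Nat.card_eq_fintype_card]
  -- the indicator rows of elements of `F`, restricted to `Str F`, are linearly independent
  have hli : LinearIndependent ℚ
      (fun w : F => fun z : (Str F) => if (z : L) ≤ (w : L) then (1:ℚ) else 0) := by
    rw [Fintype.linearIndependent_iff]
    intro g hg
    set h : L → ℚ := fun t => ∑ w : F, g w * (if t ≤ (w : L) then (1:ℚ) else 0) with hh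
    have hvanish : ∀ z : L, z ∈ Str F → h z = 0 := by
      intro z hz
      have := congrFun hg ⟨z, hz⟩
      simpa [hh, Finset.sum_apply] using this
    -- h vanishes everywhere
    have hzero : ∀ t : L, h t = 0 := by
      by_contra hcon
      push_neg at hcon
      obtain ⟨t0, ht0⟩ := hcon
      obtain ⟨z, hzmem, hzmin⟩ : ∃ z ∈ (Finset.univ.filter fun t : L => h t ≠ 0),
          ∀ y ∈ (Finset.univ.filter fun t : L => h t ≠ 0), ¬ y < z := by
        obtain ⟨z, hz⟩ := Finset.exists_minimal
          (s := Finset.univ.filter fun t : L => h t ≠ 0) ⟨t0, by simp [ht0]⟩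
        exact ⟨z, hz.1, fun y hy hlt => lt_irrefl _ (lt_of_lt_of_le hlt (hz.2 hy hlt.le))⟩
      simp only [Finset.mem_filter, Finset.mem_univ, true_and] at hzmem
      have hlt0 : ∀ y : L, y < z → h y = 0 := by
        intro y hy
        by_contra hy0
        exact hzmin y (by simp [hy0]) hy
      have hshat : z ∈ Str F := by
        intro x hxz
        have hS := key_inversion g (fun w : F => (w : L)) z x hxz
        have hred : ∑ y ∈ (Finset.univ.filter fun y => x ≤ y ∧ y ≤ z),
            mu x y * h y = mu x z * h z := by
          refine Finset.sum_eq_single_of_mem z (by simp [hxz]) ?_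
          intro y hy hne
          simp only [Finset.mem_filter, Finset.mem_univ, true_and] at hy
          rw [hlt0 y (lt_of_le_of_ne hy.2 hne), mul_zero]
        have hSne : (∑ w : F, g w * (if (w : L) ⊓ z = x then (1:ℚ) else 0)) ≠ 0 := by
          rw [← hS]
          have : ∑ y ∈ (Finset.univ.filter fun y => x ≤ y ∧ y ≤ z),
              mu x y * (∑ w : F, g w * (if y ≤ (w : L) then (1:ℚ) else 0))
              = mu x z * h z := hred
          rw [this]
          exact mul_ne_zero (hmu x z hxz) hzmem
        obtain ⟨w, -, hw⟩ := Finset.exists_ne_zero_of_sum_ne_zero hSne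
        refine ⟨(w : L), w.2, ?_⟩
        by_contra hne
        rw [if_neg hne, mul_zero] at hw
        exact hw rfl
      exact hzmem (hvanish z hshat)
    -- conclude g = 0 using a maximal element of the support
    intro w0
    by_contra hw0
    obtain ⟨w, hwmem, hwmax⟩ : ∃ w ∈ ((Finset.univ : Finset F).filter fun w => g w ≠ 0),
        ∀ y ∈ ((Finset.univ : Finset F).filter fun w => g w ≠ 0), ¬ w < y := by
      obtain ⟨w, hw⟩ := Finset.exists_maximal
        (s := (Finset.univ : Finset F).filter fun w => g w ≠ 0) ⟨w0, by simp [hw0]⟩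
      exact ⟨w, hw.1, fun y hy hlt => lt_irrefl _ (lt_of_lt_of_le hlt (hw.2 hy hlt.le))⟩
    simp only [Finset.mem_filter, Finset.mem_univ, true_and] at hwmem
    have : h (w : L) = g w := by
      show (∑ w' : F, g w' * (if (w : L) ≤ (w' : L) then (1:ℚ) else 0)) = g w
      rw [Finset.sum_eq_single_of_mem w (Finset.mem_univ w)]
      · simp
      · intro w' _ hne
        by_cases hle : (w : L) ≤ (w' : L)
        · have hgw' : g w' = 0 := by
            by_contra hg'
            have hlt : w < w' := Subtype.coe_lt_coe.mp
              (lt_of_le_of_ne hle (fun h => hne (Subtype.ext h.symm)))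
            exact hwmax w' (by simp [hg']) hlt
          rw [hgw', zero_mul]
        · rw [if_neg hle, mul_zero]
    rw [hzero (w : L)] at this
    exact hwmem this.symm
  have hcard := hli.fintype_card_le_finrank
  rwa [Module.finrank_pi] at hcard
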